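/- Let φ be a bounded holomorphic function on the open unit disk 𝔻 with |φ(λ)| > 1 for all λ ∈ 𝔻. Then the kernel K(λ, z) = (conj(φ(λ))·φ(z) − 1) / (1 − conj(λ)·z) is positive semi-definite on 𝔻. (This is the reproducing kernel of the sub-Hardy Hilbert space 𝒦(φ) = ℳ(√(T_φ T_φ* − I)).) -/

import Mathlib

open Complex Metric ComplexOrder
open intervalIntegral MeasureTheory

/-- A kernel `K` on the open unit disk is positive semi-definite if for every finite
family of points in the disk and complex coefficients, the associated quadratic form
is a nonnegative real number (using the partial order on `ℂ`). -/
def IsPSDKernelOnDisk (K : ℂ → ℂ → ℂ) : Prop :=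
  ∀ (n : ℕ) (lam : Fin n → ℂ), (∀ i, ‖lam i‖ < 1) →
    ∀ c : Fin n → ℂ,
      0 ≤ ∑ i, ∑ j, (starRingEnd ℂ) (c i) * c j * K (lam i) (lam j)


lemma myIntegral_conj {f : ℝ → ℂ} {a b : ℝ} :
    (∫ θ in a..b, (starRingEnd ℂ) (f θ)) = (starRingEnd ℂ) (∫ θ in a..b, f θ) := by
  simp [intervalIntegral, integral_conj, map_sub]

lemma key {h : ℂ → ℂ} {ρ r : ℝ} (hr : 0 < r) (hρ : r < ρ)
    (hh : DifferentiableOn ℂ h (ball 0 ρ)) {b : ℂ} (hb : ‖b‖ < r) :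
    (∫ θ in (0:ℝ)..(2*Real.pi), (starRingEnd ℂ) (h (circleMap 0 r θ)) *
      (1 - (starRingEnd ℂ) b * circleMap 0 r θ / (r:ℂ)^2)⁻¹)
      = 2 * Real.pi * (starRingEnd ℂ) (h b) := by
  have hball : closure (ball (0:ℂ) r) ⊆ ball 0 ρ := by
    rw [closure_ball (0:ℂ) hr.ne']
    exact closedBall_subset_ball hρ
  have hdc : DiffContOnCl ℂ h (ball 0 r) :=
    ⟨hh.mono (ball_subset_ball hρ.le), (hh.continuousOn).mono hball⟩
  have hbmem : b ∈ ball (0:ℂ) r := by simpa [mem_ball, Complex.dist_eq] using hb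
  have cauchy := hdc.circleIntegral_sub_inv_smul hbmem
  rw [circleIntegral] at cauchy
  simp only [deriv_circleMap, smul_eq_mul] at cauchy
  rw [← (starRingEnd ℂ).injective.eq_iff, ← myIntegral_conj]
  simp only [map_mul, map_inv₀, map_sub, map_one, map_div₀, map_pow, Complex.conj_conj,
    Complex.conj_ofReal]
  -- now: ∫ θ, h (circleMap 0 r θ) * (1 - b * conj (circleMap 0 r θ) / r^2)⁻¹ = conj(2π) * h b
  have heq : ∀ θ ∈ Set.uIcc (0:ℝ) (2*Real.pi),
      h (circleMap 0 r θ) * (1 - b * (starRingEnd ℂ) (circleMap 0 r θ) / (r:ℂ) ^ 2)⁻¹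
        = circleMap 0 r θ * Complex.I * ((circleMap 0 r θ - b)⁻¹ * h (circleMap 0 r θ)) * Complex.I⁻¹ := by
    intro θ _
    set w := circleMap 0 r θ with hw
    have hwne : w ≠ 0 := circleMap_ne_center hr.ne'
    have habs : ‖w‖ = r := by
      rw [hw, norm_circleMap_zero]; exact abs_of_pos hr
    have hr2 : w * (starRingEnd ℂ) w = (r:ℂ)^2 := by
      rw [Complex.mul_conj, Complex.normSq_eq_norm_sq, habs]
      norm_cast
    have hwb : w - b ≠ 0 := by
      intro hcon
      rw [sub_eq_zero] at hcon
      rw [hcon] at habs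
      exact hb.ne' habs.symm
    have hcne : (starRingEnd ℂ) w ≠ 0 := by simpa using hwne
    have hkey : (1 - b * (starRingEnd ℂ) w / (r:ℂ) ^ 2) = (w - b) / w := by
      rw [← hr2, mul_div_mul_right _ _ hcne, one_sub_div hwne]
    rw [hkey]
    have hIne : (Complex.I) ≠ 0 := Complex.I_ne_zero
    field_simp
  rw [intervalIntegral.integral_congr heq]
  have : (∫ θ in (0:ℝ)..(2*Real.pi), circleMap 0 r θ * Complex.I * ((circleMap 0 r θ - b)⁻¹ * h (circleMap 0 r θ)) * Complex.I⁻¹)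
      = (∫ θ in (0:ℝ)..(2*Real.pi), circleMap 0 r θ * Complex.I * ((circleMap 0 r θ - b)⁻¹ * h (circleMap 0 r θ))) * Complex.I⁻¹ :=
    intervalIntegral.integral_mul_const _ _
  rw [this, cauchy]
  have h2 : (starRingEnd ℂ) (2:ℂ) = 2 := map_ofNat (starRingEnd ℂ) 2
  rw [h2]
  field_simp

lemma key2 {g : ℂ → ℂ} {r : ℝ} (hr : 0 < r) (hr1 : r < 1)
    (hg : DifferentiableOn ℂ g (ball 0 1)) {a b : ℂ}
    (ha : ‖a‖ < r) (hb : ‖b‖ < r) :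
    (∫ θ in (0:ℝ)..(2*Real.pi),
        (starRingEnd ℂ) (g (circleMap 0 r θ) * (1 - (starRingEnd ℂ) a * circleMap 0 r θ / (r:ℂ)^2)⁻¹) *
        (1 - (starRingEnd ℂ) b * circleMap 0 r θ / (r:ℂ)^2)⁻¹)
      = 2 * Real.pi * (starRingEnd ℂ) (g b * (1 - (starRingEnd ℂ) a * b / (r:ℂ)^2)⁻¹) := by
  set ρ := min 1 (2*r^2/(‖a‖ + r)) with hρdef
  have har : 0 < ‖a‖ + r := by positivity
  have hrρ : r < ρ := by
    refine lt_min hr1 ?_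
    rw [lt_div_iff₀ har]
    nlinarith [ha]
  have hρ1 : ρ ≤ 1 := min_le_left _ _
  have hρr : ρ * (‖a‖ + r) ≤ 2*r^2 := by
    rw [← le_div_iff₀ har]
    exact min_le_right _ _
  have hρpos : 0 < ρ := lt_trans hr hrρ
  have hden : ∀ z ∈ ball (0:ℂ) ρ, (1 - (starRingEnd ℂ) a * z / (r:ℂ)^2) ≠ 0 := by
    intro z hz
    have hz' : ‖z‖ < ρ := by simpa [mem_ball, Complex.dist_eq] using hz
    have habs : ‖(starRingEnd ℂ) a * z / (r:ℂ)^2‖ < 1 := by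
      rw [norm_div, norm_mul, norm_pow, Complex.norm_conj, Complex.norm_real, Real.norm_eq_abs, abs_of_pos hr,
        div_lt_one (by positivity)]
      nlinarith [norm_nonneg a, norm_nonneg z, hz', ha, hρr, hr, hρpos]
    intro hcon
    rw [sub_eq_zero] at hcon
    rw [← hcon] at habs
    simp at habs
  have hh : DifferentiableOn ℂ (fun z => g z * (1 - (starRingEnd ℂ) a * z/(r:ℂ)^2)⁻¹) (ball 0 ρ) := by
    refine (hg.mono (ball_subset_ball hρ1)).mul (DifferentiableOn.inv ?_ hden)
    exact (differentiableOn_const 1).sub (((differentiable_id.const_mul _).div_const _).differentiableOn)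
  have h := key hr hrρ hh hb
  simpa using h

lemma stepR {φ : ℂ → ℂ} (hφ : DifferentiableOn ℂ φ (ball (0:ℂ) 1))
    (hgt : ∀ z ∈ ball (0:ℂ) 1, 1 < ‖φ z‖)
    {n : ℕ} (lam : Fin n → ℂ) (c : Fin n → ℂ) {r : ℝ} (hr : 0 < r) (hr1 : r < 1)
    (hlt : ∀ i, ‖lam i‖ < r) :
    0 ≤ ∑ i, ∑ j, (starRingEnd ℂ) (c i) * c j *
      (((starRingEnd ℂ) (φ (lam i)) * φ (lam j) - 1) *
        (1 - (starRingEnd ℂ) (lam i) * lam j / (r:ℂ)^2)⁻¹) := by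
  have twopi_pos : (0:ℝ) < 2 * Real.pi := by positivity
  have hmem : ∀ i, lam i ∈ ball (0:ℂ) 1 := fun i => by
    simp only [mem_ball, Complex.dist_eq, sub_zero]
    exact (hlt i).trans hr1
  have hφne : ∀ z ∈ ball (0:ℂ) 1, φ z ≠ 0 := by
    intro z hz h0
    have := hgt z hz
    rw [h0] at this
    simp only [norm_zero] at this
    linarith
  set ψ : ℂ → ℂ := fun z => (φ z)⁻¹ with hψdef
  have hψd : DifferentiableOn ℂ ψ (ball 0 1) := hφ.inv hφne
  have hψle : ∀ z ∈ ball (0:ℂ) 1, ‖ψ z‖ ≤ 1 := by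
    intro z hz
    have h1 := hgt z hz
    have h2 : ‖ψ z‖ = (‖φ z‖)⁻¹ := by simp [hψdef]
    rw [h2, inv_le_one_iff₀]
    right; exact h1.le
  have hcirc : ∀ θ : ℝ, circleMap 0 r θ ∈ ball (0:ℂ) 1 := by
    intro θ
    simp only [mem_ball, Complex.dist_eq, sub_zero]
    rw [norm_circleMap_zero, abs_of_pos hr]
    exact hr1
  set Kval : Fin n → Fin n → ℂ :=
    fun i j => (1 - (starRingEnd ℂ) (lam i) * lam j / (r:ℂ)^2)⁻¹ with hKval
  set d : Fin n → ℝ → ℂ :=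
    fun i θ => (1 - (starRingEnd ℂ) (lam i) * circleMap 0 r θ / (r:ℂ)^2)⁻¹ with hd
  set F : ℝ → ℂ := fun θ => ∑ i, (starRingEnd ℂ) (c i) * d i θ with hF
  set G : ℝ → ℂ := fun θ => ∑ i, (starRingEnd ℂ) (c i * φ (lam i)) * d i θ with hG
  -- continuity
  have hcontd : ∀ i, Continuous (d i) := by
    intro i
    refine Continuous.inv₀
      (continuous_const.sub ((continuous_const.mul (continuous_circleMap 0 r)).div_const _)) ?_
    intro θ
    intro h0
    rw [sub_eq_zero] at h0
    have : ‖(starRingEnd ℂ) (lam i) * circleMap 0 r θ / (r:ℂ)^2‖ = 1 := by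
      rw [← h0]; simp
    rw [norm_div, norm_mul, Complex.norm_conj, norm_pow, Complex.norm_real, Real.norm_eq_abs, abs_of_pos hr,
      norm_circleMap_zero, abs_of_pos hr] at this
    have h2 : ‖lam i‖ * r < r^2 := by nlinarith [hlt i]
    rw [div_eq_one_iff_eq (by positivity)] at this
    nlinarith
  have hcontF : Continuous F := by
    refine continuous_finset_sum _ (fun i _ => continuous_const.mul (hcontd i))
  have hcontG : Continuous G := by
    refine continuous_finset_sum _ (fun i _ => continuous_const.mul (hcontd i))
  have hcontψ : Continuous (fun θ => ψ (circleMap 0 r θ)) := by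
    have hc : Continuous (fun θ => φ (circleMap 0 r θ)) :=
      hφ.continuousOn.comp_continuous (continuous_circleMap 0 r) hcirc
    exact hc.inv₀ (fun θ => hφne _ (hcirc θ))
  -- the three integral computations
  have hA : ∀ i j, (∫ θ in (0:ℝ)..(2*Real.pi), (starRingEnd ℂ) (d i θ) * d j θ)
      = 2 * Real.pi * (starRingEnd ℂ) (Kval i j) := by
    intro i j
    have h := key2 (g := fun _ => (1:ℂ)) hr hr1 (differentiableOn_const 1) (hlt i) (hlt j)
    simp only [one_mul] at h
    exact h
  have hB : ∀ i j, (∫ θ in (0:ℝ)..(2*Real.pi),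
        (starRingEnd ℂ) (ψ (circleMap 0 r θ) * d i θ) * d j θ)
      = 2 * Real.pi * (starRingEnd ℂ) (ψ (lam j) * Kval i j) := by
    intro i j
    have h := key2 (g := ψ) hr hr1 hψd (hlt i) (hlt j)
    exact h
  have hGG : (∫ θ in (0:ℝ)..(2*Real.pi), (starRingEnd ℂ) (G θ) * G θ)
      = ∑ i, ∑ j, (c i * φ (lam i)) * (starRingEnd ℂ) (c j * φ (lam j)) *
          (2 * Real.pi * (starRingEnd ℂ) (Kval i j)) := by
    have hexp : ∀ θ : ℝ, (starRingEnd ℂ) (G θ) * G θ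
        = ∑ i, ∑ j, (c i * φ (lam i)) * (starRingEnd ℂ) (c j * φ (lam j)) *
            ((starRingEnd ℂ) (d i θ) * d j θ) := by
      intro θ
      rw [hG]
      simp only [map_sum, map_mul, Complex.conj_conj]
      rw [Finset.sum_mul_sum]
      exact Finset.sum_congr rfl fun i _ => Finset.sum_congr rfl fun j _ => by ring
    rw [intervalIntegral.integral_congr (fun θ _ => hexp θ)]
    rw [intervalIntegral.integral_finset_sum]
    · refine Finset.sum_congr rfl fun i _ => ?_
      rw [intervalIntegral.integral_finset_sum]
      · exact Finset.sum_congr rfl fun j _ => by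
          rw [intervalIntegral.integral_const_mul, hA i j]
      · intro j _
        exact (Continuous.intervalIntegrable (by
          exact continuous_const.mul (((hcontd i).star).mul (hcontd j))) _ _)
    · intro i _
      refine Continuous.intervalIntegrable ?_ _ _
      exact continuous_finset_sum _ fun j _ =>
        continuous_const.mul (((hcontd i).star).mul (hcontd j))
  have hFF : (∫ θ in (0:ℝ)..(2*Real.pi), (starRingEnd ℂ) (F θ) * F θ)
      = ∑ i, ∑ j, (c i) * (starRingEnd ℂ) (c j) *
          (2 * Real.pi * (starRingEnd ℂ) (Kval i j)) := by
    have hexp : ∀ θ : ℝ, (starRingEnd ℂ) (F θ) * F θ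
        = ∑ i, ∑ j, (c i) * (starRingEnd ℂ) (c j) *
            ((starRingEnd ℂ) (d i θ) * d j θ) := by
      intro θ
      rw [hF]
      simp only [map_sum, map_mul, Complex.conj_conj]
      rw [Finset.sum_mul_sum]
      exact Finset.sum_congr rfl fun i _ => Finset.sum_congr rfl fun j _ => by ring
    rw [intervalIntegral.integral_congr (fun θ _ => hexp θ)]
    rw [intervalIntegral.integral_finset_sum]
    · refine Finset.sum_congr rfl fun i _ => ?_
      rw [intervalIntegral.integral_finset_sum]
      · exact Finset.sum_congr rfl fun j _ => by
          rw [intervalIntegral.integral_const_mul, hA i j]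
      · intro j _
        exact (Continuous.intervalIntegrable
          (continuous_const.mul (((hcontd i).star).mul (hcontd j))) _ _)
    · intro i _
      refine Continuous.intervalIntegrable ?_ _ _
      exact continuous_finset_sum _ fun j _ =>
        continuous_const.mul (((hcontd i).star).mul (hcontd j))
  have hXX : (∫ θ in (0:ℝ)..(2*Real.pi),
        (starRingEnd ℂ) (ψ (circleMap 0 r θ) * F θ) * G θ)
      = ∑ i, ∑ j, (c i) * (starRingEnd ℂ) (c j * φ (lam j)) *
          (2 * Real.pi * (starRingEnd ℂ) (ψ (lam j) * Kval i j)) := by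
    have hexp : ∀ θ : ℝ, (starRingEnd ℂ) (ψ (circleMap 0 r θ) * F θ) * G θ
        = ∑ i, ∑ j, (c i) * (starRingEnd ℂ) (c j * φ (lam j)) *
            ((starRingEnd ℂ) (ψ (circleMap 0 r θ) * d i θ) * d j θ) := by
      intro θ
      rw [hF, hG]
      simp only [map_sum, map_mul, Complex.conj_conj, Finset.mul_sum, Finset.sum_mul]
      rw [Finset.sum_comm]
      exact Finset.sum_congr rfl fun i _ => Finset.sum_congr rfl fun j _ => by ring
    rw [intervalIntegral.integral_congr (fun θ _ => hexp θ)]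
    rw [intervalIntegral.integral_finset_sum]
    · refine Finset.sum_congr rfl fun i _ => ?_
      rw [intervalIntegral.integral_finset_sum]
      · exact Finset.sum_congr rfl fun j _ => by
          rw [intervalIntegral.integral_const_mul, hB i j]
      · intro j _
        exact (Continuous.intervalIntegrable
          (continuous_const.mul (((hcontψ.mul (hcontd i)).star).mul (hcontd j))) _ _)
    · intro i _
      refine Continuous.intervalIntegrable ?_ _ _
      exact continuous_finset_sum _ fun j _ =>
        continuous_const.mul (((hcontψ.mul (hcontd i)).star).mul (hcontd j))
  -- the cross integral equals the F integral
  have hXF : (∫ θ in (0:ℝ)..(2*Real.pi),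
        (starRingEnd ℂ) (ψ (circleMap 0 r θ) * F θ) * G θ)
      = (∫ θ in (0:ℝ)..(2*Real.pi), (starRingEnd ℂ) (F θ) * F θ) := by
    rw [hXX, hFF]
    refine Finset.sum_congr rfl fun i _ => Finset.sum_congr rfl fun j _ => ?_
    have hφψ : φ (lam j) * ψ (lam j) = 1 := mul_inv_cancel₀ (hφne _ (hmem j))
    simp only [map_mul]
    calc c i * ((starRingEnd ℂ) (c j) * (starRingEnd ℂ) (φ (lam j))) *
          (2 * Real.pi * ((starRingEnd ℂ) (ψ (lam j)) * (starRingEnd ℂ) (Kval i j)))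
        = ((starRingEnd ℂ) (φ (lam j)) * (starRingEnd ℂ) (ψ (lam j))) *
            (c i * (starRingEnd ℂ) (c j) * (2 * Real.pi * (starRingEnd ℂ) (Kval i j))) := by
          ring
      _ = c i * (starRingEnd ℂ) (c j) * (2 * Real.pi * (starRingEnd ℂ) (Kval i j)) := by
          rw [← map_mul, hφψ, map_one, one_mul]
  -- real forms
  set nsF : ℝ := ∫ θ in (0:ℝ)..(2*Real.pi), Complex.normSq (F θ) with hnsF
  set nsG : ℝ := ∫ θ in (0:ℝ)..(2*Real.pi), Complex.normSq (G θ) with hnsG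
  have hFreal : (∫ θ in (0:ℝ)..(2*Real.pi), (starRingEnd ℂ) (F θ) * F θ) = (nsF : ℂ) := by
    rw [hnsF, ← intervalIntegral.integral_ofReal]
    exact intervalIntegral.integral_congr fun θ _ => Complex.normSq_eq_conj_mul_self.symm
  have hGreal : (∫ θ in (0:ℝ)..(2*Real.pi), (starRingEnd ℂ) (G θ) * G θ) = (nsG : ℂ) := by
    rw [hnsG, ← intervalIntegral.integral_ofReal]
    exact intervalIntegral.integral_congr fun θ _ => Complex.normSq_eq_conj_mul_self.symm
  have hnsF_nonneg : 0 ≤ nsF :=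
    intervalIntegral.integral_nonneg twopi_pos.le (fun θ _ => Complex.normSq_nonneg _)
  -- the inequality nsF ≤ nsG
  have hle : nsF ≤ nsG := by
    have h1 : (nsF : ℂ) = ∫ θ in (0:ℝ)..(2*Real.pi),
        (starRingEnd ℂ) (ψ (circleMap 0 r θ) * F θ) * G θ := by
      rw [hXF, hFreal]
    have h2 : nsF ≤ ∫ θ in (0:ℝ)..(2*Real.pi),
        ‖(starRingEnd ℂ) (ψ (circleMap 0 r θ) * F θ) * G θ‖ := by
      have := intervalIntegral.norm_integral_le_integral_norm
        (f := fun θ => (starRingEnd ℂ) (ψ (circleMap 0 r θ) * F θ) * G θ)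
        (μ := MeasureTheory.volume) twopi_pos.le
      rw [← h1] at this
      simpa [Complex.norm_real, _root_.abs_of_nonneg hnsF_nonneg] using this
    have h3 : (∫ θ in (0:ℝ)..(2*Real.pi),
          ‖(starRingEnd ℂ) (ψ (circleMap 0 r θ) * F θ) * G θ‖)
        ≤ ∫ θ in (0:ℝ)..(2*Real.pi), (Complex.normSq (F θ) + Complex.normSq (G θ))/2 := by
      refine intervalIntegral.integral_mono_on twopi_pos.le ?_ ?_ ?_
      · exact (Continuous.intervalIntegrable (((hcontψ.mul hcontF).star).mul hcontG).norm _ _)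
      · exact (Continuous.intervalIntegrable
          (((Complex.continuous_normSq.comp hcontF).add
            (Complex.continuous_normSq.comp hcontG)).div_const 2) _ _)
      · intro θ _
        have hψθ : ‖ψ (circleMap 0 r θ)‖ ≤ 1 := hψle _ (hcirc θ)
        have habsF : (0:ℝ) ≤ ‖F θ‖ := norm_nonneg _
        have habsG : (0:ℝ) ≤ ‖G θ‖ := norm_nonneg _
        have : ‖(starRingEnd ℂ) (ψ (circleMap 0 r θ) * F θ) * G θ‖
            = ‖ψ (circleMap 0 r θ)‖ * ‖F θ‖ * ‖G θ‖ := by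
          simp [map_mul]
        rw [this, Complex.normSq_eq_norm_sq, Complex.normSq_eq_norm_sq]
        have h5 : ‖ψ (circleMap 0 r θ)‖ * ‖F θ‖ * ‖G θ‖
            ≤ ‖F θ‖ * ‖G θ‖ := by
          nlinarith [mul_nonneg habsF habsG]
        nlinarith [sq_nonneg (‖F θ‖ - ‖G θ‖), h5]
    have h4 : (∫ θ in (0:ℝ)..(2*Real.pi),
          (Complex.normSq (F θ) + Complex.normSq (G θ))/2) = (nsF + nsG)/2 := by
      have hi1 : IntervalIntegrable (fun θ => Complex.normSq (F θ))
          MeasureTheory.volume 0 (2*Real.pi) :=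
        Continuous.intervalIntegrable (Complex.continuous_normSq.comp hcontF) _ _
      have hi2 : IntervalIntegrable (fun θ => Complex.normSq (G θ))
          MeasureTheory.volume 0 (2*Real.pi) :=
        Continuous.intervalIntegrable (Complex.continuous_normSq.comp hcontG) _ _
      rw [intervalIntegral.integral_div, intervalIntegral.integral_add hi1 hi2]
    rw [h4] at h3
    linarith [le_trans h2 h3]
  -- conjugation identity for Kval
  have hKc : ∀ p q, (starRingEnd ℂ) (Kval p q) = Kval q p := by
    intro p q
    simp only [hKval, map_inv₀, map_sub, map_one, map_div₀, map_mul, Complex.conj_conj,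
      map_pow, Complex.conj_ofReal]
    ring_nf
  -- assemble
  have hGG' : ((2 * Real.pi : ℝ) : ℂ) *
      (∑ i, ∑ j, (starRingEnd ℂ) (c i) * c j *
        ((starRingEnd ℂ) (φ (lam i)) * φ (lam j) * Kval i j)) = (nsG : ℂ) := by
    rw [← hGreal, hGG, Finset.sum_comm, Finset.mul_sum]
    refine Finset.sum_congr rfl fun j _ => ?_
    rw [Finset.mul_sum]
    refine Finset.sum_congr rfl fun i _ => ?_
    rw [hKc]
    simp only [map_mul]
    push_cast
    ring
  have hFF' : ((2 * Real.pi : ℝ) : ℂ) *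
      (∑ i, ∑ j, (starRingEnd ℂ) (c i) * c j * Kval i j) = (nsF : ℂ) := by
    rw [← hFreal, hFF, Finset.sum_comm, Finset.mul_sum]
    refine Finset.sum_congr rfl fun j _ => ?_
    rw [Finset.mul_sum]
    refine Finset.sum_congr rfl fun i _ => ?_
    rw [hKc]
    push_cast
    ring
  have hbig : ((2 * Real.pi : ℝ) : ℂ) *
      (∑ i, ∑ j, (starRingEnd ℂ) (c i) * c j *
        (((starRingEnd ℂ) (φ (lam i)) * φ (lam j) - 1) * Kval i j))
      = (nsG : ℂ) - (nsF : ℂ) := by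
    rw [← hGG', ← hFF', ← mul_sub]
    congr 1
    rw [← Finset.sum_sub_distrib]
    refine Finset.sum_congr rfl fun i _ => ?_
    rw [← Finset.sum_sub_distrib]
    exact Finset.sum_congr rfl fun j _ => by ring
  have hπne : ((2 * Real.pi : ℝ) : ℂ) ≠ 0 :=
    Complex.ofReal_ne_zero.mpr twopi_pos.ne'
  have hfin : (∑ i, ∑ j, (starRingEnd ℂ) (c i) * c j *
        (((starRingEnd ℂ) (φ (lam i)) * φ (lam j) - 1) * Kval i j))
      = (((2 * Real.pi)⁻¹ * (nsG - nsF) : ℝ) : ℂ) := by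
    rw [Complex.ofReal_mul, Complex.ofReal_inv, Complex.ofReal_sub, ← hbig,
      inv_mul_cancel_left₀ hπne]
  rw [hfin, Complex.zero_le_real]
  have h0 : (0:ℝ) ≤ nsG - nsF := by linarith
  exact mul_nonneg (by positivity) h0

/-- If `φ` is bounded holomorphic with `|φ| > 1` on the disk, then the kernel
`(conj(φ λ) φ z − 1)/(1 − conj λ · z)` is positive semi-definite. -/
theorem psd_kernel_of_K_phi
    (φ : ℂ → ℂ) (hφ : DifferentiableOn ℂ φ (ball (0 : ℂ) 1))
    (hb : ∃ M : ℝ, ∀ z ∈ ball (0 : ℂ) 1, ‖φ z‖ ≤ M)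
    (hgt : ∀ lam ∈ ball (0 : ℂ) 1, 1 < ‖φ lam‖) :
    IsPSDKernelOnDisk (fun lam z =>
        ((starRingEnd ℂ) (φ lam) * φ z - 1) / (1 - (starRingEnd ℂ) lam * z)) := by
  intro n lam hlam c
  set R : NNReal := Finset.univ.sup (fun i => ‖lam i‖₊) with hRdef
  have hR1 : (R:ℝ) < 1 := by
    have h : Finset.univ.sup (fun i => ‖lam i‖₊) < (1:NNReal) := by
      rw [Finset.sup_lt_iff (by norm_num : (⊥:NNReal) < 1)]
      intro i _
      have h2 := hlam i
      exact_mod_cast h2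
    exact_mod_cast h
  have hRlt : ∀ i, ‖lam i‖ ≤ (R:ℝ) := by
    intro i
    have h : ‖lam i‖₊ ≤ R := by
      rw [hRdef]
      exact Finset.le_sup (f := fun i => ‖lam i‖₊) (Finset.mem_univ i)
    exact_mod_cast h
  set Φ : ℝ → ℂ := fun r => ∑ i, ∑ j, (starRingEnd ℂ) (c i) * c j *
      (((starRingEnd ℂ) (φ (lam i)) * φ (lam j) - 1) *
        (1 - (starRingEnd ℂ) (lam i) * lam j / (r:ℂ)^2)⁻¹) with hΦ
  have hpos : ∀ r ∈ Set.Ioo (R:ℝ) 1, 0 ≤ Φ r := by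
    intro r hr
    exact stepR hφ hgt lam c (lt_of_le_of_lt R.2 hr.1) hr.2
      (fun i => lt_of_le_of_lt (hRlt i) hr.1)
  have hdenne : ∀ i j : Fin n,
      (1 - (starRingEnd ℂ) (lam i) * lam j / ((1:ℝ):ℂ)^2) ≠ 0 := by
    intro i j h0
    rw [sub_eq_zero] at h0
    have habs : ‖(starRingEnd ℂ) (lam i) * lam j / ((1:ℝ):ℂ)^2‖ < 1 := by
      rw [norm_div, norm_mul, Complex.norm_conj, norm_pow, Complex.norm_real, Real.norm_eq_abs]
      simp only [abs_one, one_pow, div_one]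
      calc ‖lam i‖ * ‖lam j‖
          ≤ 1 * ‖lam j‖ := by
            exact mul_le_mul_of_nonneg_right (hlam i).le (norm_nonneg _)
        _ = ‖lam j‖ := one_mul _
        _ < 1 := hlam j
    rw [← h0] at habs
    simp at habs
  have hcontΦ : ContinuousAt Φ 1 := by
    rw [hΦ]
    refine tendsto_finset_sum _ (fun i _ => tendsto_finset_sum _ (fun j _ => ?_))
    have h1 : ContinuousAt (fun r:ℝ => (1 - (starRingEnd ℂ) (lam i) * lam j / (r:ℂ)^2)⁻¹) 1 := by
      refine ContinuousAt.inv₀ ?_ (hdenne i j)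
      exact continuousAt_const.sub (continuousAt_const.div
        ((Complex.continuous_ofReal.continuousAt).pow 2) (by norm_num))
    exact continuousAt_const.mul (continuousAt_const.mul h1)
  have htend : Filter.Tendsto Φ (nhdsWithin 1 (Set.Ioo (R:ℝ) 1)) (nhds (Φ 1)) :=
    hcontΦ.continuousWithinAt.tendsto
  haveI : Filter.NeBot (nhdsWithin 1 (Set.Ioo (R:ℝ) 1)) := right_nhdsWithin_Ioo_neBot hR1
  have h0le : (0:ℂ) ≤ Φ 1 := by
    refine ge_of_tendsto htend ?_
    exact Filter.eventually_of_mem self_mem_nhdsWithin hpos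
  have hfinal : (∑ i, ∑ j, (starRingEnd ℂ) (c i) * c j *
      (((starRingEnd ℂ) (φ (lam i)) * φ (lam j) - 1) / (1 - (starRingEnd ℂ) (lam i) * lam j)))
      = Φ 1 := by
    rw [hΦ]
    refine Finset.sum_congr rfl fun i _ => Finset.sum_congr rfl fun j _ => ?_
    rw [Complex.ofReal_one, one_pow, div_one, div_eq_mul_inv]
  show (0:ℂ) ≤ ∑ i, ∑ j, (starRingEnd ℂ) (c i) * c j *
      (((starRingEnd ℂ) (φ (lam i)) * φ (lam j) - 1) / (1 - (starRingEnd ℂ) (lam i) * lam j))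
  rw [hfinal]
  exact h0le
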